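/- Let m ≥ 1, δ ≥ 1/(2m−1), and let D_m, D_n, D_1 : [0,T] → [1,∞) be measurable with D_n² ≤ D_m^{(4m-3)/(2m-1)} D_1^{1/(2m-1)} pointwise. Then ⟨D_n² D_m^{δ−2}⟩_T ≤ ((2m−1)δ − 1)/((2m−1)δ) · ⟨D_m^δ⟩_T + 1/((2m−1)δ) · ⟨D_1^δ⟩_T. -/

import Mathlib

theorem stmt12 (m : ℕ) (hm : 1 ≤ m) (T δ : ℝ) (hT : 0 < T)
    (hδ : 1 / (2 * (m : ℝ) - 1) ≤ δ)
    (Dm Dn D1 : ℝ → ℝ)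
    (hDm : ∀ t, 1 ≤ Dm t) (hDn : ∀ t, 1 ≤ Dn t) (hD1 : ∀ t, 1 ≤ D1 t)
    (hpt : ∀ t, Dn t ^ (2 : ℝ) ≤
      Dm t ^ ((4 * (m : ℝ) - 3) / (2 * (m : ℝ) - 1)) * D1 t ^ (1 / (2 * (m : ℝ) - 1)))
    (h1 : IntervalIntegrable (fun t => Dn t ^ (2 : ℝ) * Dm t ^ (δ - 2)) MeasureTheory.volume 0 T)
    (h2 : IntervalIntegrable (fun t => Dm t ^ δ) MeasureTheory.volume 0 T)
    (h3 : IntervalIntegrable (fun t => D1 t ^ δ) MeasureTheory.volume 0 T) :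
    (1 / T) * ∫ t in (0 : ℝ)..T, Dn t ^ (2 : ℝ) * Dm t ^ (δ - 2) ≤
      ((2 * (m : ℝ) - 1) * δ - 1) / ((2 * (m : ℝ) - 1) * δ) *
        ((1 / T) * ∫ t in (0 : ℝ)..T, Dm t ^ δ) +
      1 / ((2 * (m : ℝ) - 1) * δ) * ((1 / T) * ∫ t in (0 : ℝ)..T, D1 t ^ δ) := by
  set c : ℝ := 2 * (m : ℝ) - 1 with hc
  have hm1 : (1 : ℝ) ≤ (m : ℝ) := by exact_mod_cast hm
  have hc1 : (1 : ℝ) ≤ c := by simp only [hc]; linarith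
  have hc0 : (0 : ℝ) < c := by linarith
  have hδ0 : 0 < δ := lt_of_lt_of_le (by positivity) hδ
  have hcδ : (1 : ℝ) ≤ c * δ := by
    have := mul_le_mul_of_nonneg_left hδ hc0.le
    rwa [mul_one_div, div_self hc0.ne'] at this
  have hcδ0 : (0 : ℝ) < c * δ := by linarith
  set a : ℝ := (c * δ - 1) / (c * δ) with ha
  set b : ℝ := 1 / (c * δ) with hb
  have ha0 : 0 ≤ a := by apply div_nonneg <;> linarith
  have hb0 : 0 ≤ b := by positivity
  have hab : a + b = 1 := by rw [ha, hb]; field_simp; ring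
  -- pointwise bound
  have key : ∀ t, Dn t ^ (2 : ℝ) * Dm t ^ (δ - 2) ≤ a * Dm t ^ δ + b * D1 t ^ δ := by
    intro t
    have hDm0 : (0 : ℝ) < Dm t := lt_of_lt_of_le one_pos (hDm t)
    have hD10 : (0 : ℝ) < D1 t := lt_of_lt_of_le one_pos (hD1 t)
    have step1 : Dn t ^ (2 : ℝ) * Dm t ^ (δ - 2) ≤
        Dm t ^ (δ - 1 / c) * D1 t ^ (1 / c) := by
      have h := mul_le_mul_of_nonneg_right (hpt t) (Real.rpow_nonneg hDm0.le (δ - 2))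
      calc Dn t ^ (2 : ℝ) * Dm t ^ (δ - 2)
          ≤ Dm t ^ ((4 * (m : ℝ) - 3) / c) * D1 t ^ (1 / c) * Dm t ^ (δ - 2) := h
        _ = Dm t ^ (δ - 1 / c) * D1 t ^ (1 / c) := by
            rw [mul_right_comm, ← Real.rpow_add hDm0]
            congr 2
            field_simp
            ring
    have he1 : δ - 1 / c = δ * a := by
      rw [ha]; field_simp
    have he2 : (1 : ℝ) / c = δ * b := by
      rw [hb]; field_simp
    rw [he1, he2, Real.rpow_mul hDm0.le, Real.rpow_mul hD10.le] at step1
    refine step1.trans ?_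
    exact Real.geom_mean_le_arith_mean2_weighted ha0 hb0
      (Real.rpow_nonneg hDm0.le δ) (Real.rpow_nonneg hD10.le δ) hab
  -- integrate
  have hint : IntervalIntegrable (fun t => a * Dm t ^ δ + b * D1 t ^ δ)
      MeasureTheory.volume 0 T := (h2.const_mul a).add (h3.const_mul b)
  have hI : (∫ t in (0:ℝ)..T, Dn t ^ (2 : ℝ) * Dm t ^ (δ - 2)) ≤
      ∫ t in (0:ℝ)..T, (a * Dm t ^ δ + b * D1 t ^ δ) :=
    intervalIntegral.integral_mono_on hT.le h1 hint (fun t _ => key t)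
  have hsplit : (∫ t in (0:ℝ)..T, (a * Dm t ^ δ + b * D1 t ^ δ)) =
      a * (∫ t in (0:ℝ)..T, Dm t ^ δ) + b * (∫ t in (0:ℝ)..T, D1 t ^ δ) := by
    rw [intervalIntegral.integral_add (h2.const_mul a) (h3.const_mul b),
      intervalIntegral.integral_const_mul, intervalIntegral.integral_const_mul]
  have hT' : 0 ≤ 1 / T := by positivity
  calc (1 / T) * ∫ t in (0:ℝ)..T, Dn t ^ (2 : ℝ) * Dm t ^ (δ - 2)
      ≤ (1 / T) * (a * (∫ t in (0:ℝ)..T, Dm t ^ δ) + b * (∫ t in (0:ℝ)..T, D1 t ^ δ)) := by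
        apply mul_le_mul_of_nonneg_left _ hT'
        rw [← hsplit]; exact hI
    _ = a * ((1 / T) * ∫ t in (0:ℝ)..T, Dm t ^ δ) + b * ((1 / T) * ∫ t in (0:ℝ)..T, D1 t ^ δ) := by
        ring
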